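/- Let F(u,λ,α,β) = -u³ - (λ+u)² + βu - α (the homogeneous steady-state function with γ = 0). At the point (u,λ,α,β) = (-1/3, 1/3, -2/27, 1/3) the following hold: F = 0, ∂F/∂u = 0, ∂F/∂λ = 0, ∂²F/∂u² = 0, while ∂²F/∂u∂λ = -2 ≠ 0 and ∂³F/∂u³ = -6 ≠ 0. (These are the defining derivative conditions for F to have a pitchfork singularity at that point.) -/

import Mathlib

/-- The homogeneous steady-state function with `γ = 0`:
`F(u,λ,α,β) = -u³ - (λ+u)² + βu - α`. -/
noncomputable def Fss0 (u lam alp bet : ℝ) : ℝ :=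
  -u ^ 3 - (lam + u) ^ 2 + bet * u - alp

lemma d1 (lam alp bet : ℝ) :
    deriv (fun u => Fss0 u lam alp bet) = fun u => -3*u^2 - 2*(lam+u) + bet := by
  funext u
  have h : HasDerivAt (fun u => Fss0 u lam alp bet) (-3*u^2 - 2*(lam+u) + bet) u := by
    unfold Fss0
    have : HasDerivAt (fun u : ℝ => -u ^ 3 - (lam + u) ^ 2 + bet * u - alp)
        (-(3*u^2) - (2*(lam+u)*(0+1)) + bet*1 - 0) u := by
      exact ((((hasDerivAt_pow 3 u).neg.sub
        (((hasDerivAt_const u lam).add (hasDerivAt_id u)).pow 2)).add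
        ((hasDerivAt_id u).const_mul bet)).sub (hasDerivAt_const u alp))
        |>.congr_deriv (by simp only [Pi.add_apply, id_eq]; ring)
    exact this.congr_deriv (by ring)
  exact h.deriv

lemma d2 (lam alp bet : ℝ) :
    deriv (deriv (fun u => Fss0 u lam alp bet)) = fun u => -6*u - 2 := by
  rw [d1]
  funext u
  have h : HasDerivAt (fun u : ℝ => -3*u^2 - 2*(lam+u) + bet) (-6*u - 2) u := by
    have : HasDerivAt (fun u : ℝ => -3*u^2 - 2*(lam+u) + bet)
        (-3*(2*u) - 2*(0+1) + 0) u :=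
      ((((hasDerivAt_pow 2 u).congr_deriv (by ring)).const_mul (-3)).sub
        (((hasDerivAt_const u lam).add (hasDerivAt_id u)).const_mul 2)).add
        (hasDerivAt_const u bet)
    exact this.congr_deriv (by ring)
  exact h.deriv

lemma d3 (lam alp bet : ℝ) :
    deriv (deriv (deriv (fun u => Fss0 u lam alp bet))) = fun u => -6 := by
  rw [d2]
  funext u
  have h : HasDerivAt (fun u : ℝ => -6*u - 2) (-6) u := by
    have := ((hasDerivAt_id u).const_mul (-6 : ℝ)).sub (hasDerivAt_const u (2:ℝ))
    exact this.congr_deriv (by ring)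
  exact h.deriv

theorem pitchfork_singularity_of_homogeneous_steady_state :
    Fss0 (-1/3) (1/3) (-2/27) (1/3) = 0 ∧
    deriv (fun u => Fss0 u (1/3) (-2/27) (1/3)) (-1/3) = 0 ∧
    deriv (fun lam => Fss0 (-1/3) lam (-2/27) (1/3)) (1/3) = 0 ∧
    deriv (deriv (fun u => Fss0 u (1/3) (-2/27) (1/3))) (-1/3) = 0 ∧
    deriv (fun lam => deriv (fun u => Fss0 u lam (-2/27) (1/3)) (-1/3)) (1/3) = -2 ∧
    (-2 : ℝ) ≠ 0 ∧
    deriv (deriv (deriv (fun u => Fss0 u (1/3) (-2/27) (1/3)))) (-1/3) = -6 ∧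
    (-6 : ℝ) ≠ 0 := by
  refine ⟨?_, ?_, ?_, ?_, ?_, by norm_num, ?_, by norm_num⟩
  · unfold Fss0; norm_num
  · rw [d1]; norm_num
  · have h : HasDerivAt (fun lam => Fss0 (-1/3 : ℝ) lam (-2/27) (1/3))
        (-(2*(1/3 + -1/3)*(1+0))) (1/3) := by
      unfold Fss0
      exact (((hasDerivAt_const (1/3 : ℝ) (-(-1/3:ℝ)^3)).sub
        (((hasDerivAt_id (1/3:ℝ)).add (hasDerivAt_const _ (-1/3:ℝ))).pow 2)).add
        (hasDerivAt_const _ ((1/3:ℝ)*(-1/3)))).sub (hasDerivAt_const _ (-2/27:ℝ))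
        |>.congr_deriv (by simp only [Pi.add_apply, id_eq]; ring)
    rw [h.deriv]; norm_num
  · rw [d2]; norm_num
  · have heq : (fun lam => deriv (fun u => Fss0 u lam (-2/27) (1/3)) (-1/3 : ℝ))
        = fun lam => -3*(-1/3:ℝ)^2 - 2*(lam + -1/3) + 1/3 := by
      funext lam; rw [d1]
    rw [heq]
    have h : HasDerivAt (fun lam : ℝ => -3*(-1/3:ℝ)^2 - 2*(lam + -1/3) + 1/3)
        (-2 : ℝ) (1/3) := by
      have := ((hasDerivAt_const (1/3:ℝ) (-3*(-1/3:ℝ)^2)).sub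
        (((hasDerivAt_id (1/3:ℝ)).add (hasDerivAt_const _ (-1/3:ℝ))).const_mul 2)).add
        (hasDerivAt_const _ (1/3:ℝ))
      exact this.congr_deriv (by ring)
    exact h.deriv
  · rw [d3]
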